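/- Suppose k_2(t) = S[P^(2t+1)] - S[P^(2)] + log 2 for t ≥ 1, k_3(t) = -S[P^(2t+1)]/2 + S[P^(2t-1)] - S[P^(2t-3)]/2 for t > 1 with k_3(1) = -S[P^(3)]/2 + S[P^(2)] - S[P^(1)]/2, k_{2m+1}(t) = k_3(t-m+1) for 1 ≤ m ≤ t, and k_{2m}(t) = 0 for m ≥ 2. Then the excess entropy η(t) = k_2(t) + Σ_{m=1}^{t} 2m · k_{2m+1}(t) satisfies η(t) = (2t-1)ζ + log 2 for all t ≥ 1, where ζ = S[P^(2)] - S[P^(1)]. -/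

import Mathlib

/-- Under the stated structure of the correlation information terms of the Q2R model,
the excess entropy `η(t) = k_2(t) + Σ_{m=1}^t 2m·k_{2m+1}(t)` satisfies
`η(t) = (2t-1)ζ + log 2` for all `t ≥ 1`, where `ζ = S[P^(2)] - S[P^(1)]`. -/
theorem stmt_16 (p : ℝ) (hp0 : 0 < p) (hp : p < 1 / 2)
    (f : ℕ → ℝ) (hf : ∀ n, f n = (1 - (1 - 2 * p) ^ n) / 2)
    (S : ℝ → ℝ) (hS : ∀ q, S q = -q * Real.log q - (1 - q) * Real.log (1 - q))
    (k : ℕ → ℕ → ℝ) (η : ℕ → ℝ)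
    (hk2 : ∀ t, 1 ≤ t → k 2 t = S (f (2 * t + 1)) - S (f 2) + Real.log 2)
    (hk31 : k 3 1 = -S (f 3) / 2 + S (f 2) - S (f 1) / 2)
    (hk3 : ∀ t, 1 < t →
        k 3 t = -S (f (2 * t + 1)) / 2 + S (f (2 * t - 1)) - S (f (2 * t - 3)) / 2)
    (hodd : ∀ m t, 1 ≤ m → m ≤ t → k (2 * m + 1) t = k 3 (t - m + 1))
    (heven : ∀ m t, 2 ≤ m → k (2 * m) t = 0)
    (hη : ∀ t, η t = k 2 t + ∑ m ∈ Finset.Icc 1 t, (2 * m : ℝ) * k (2 * m + 1) t) :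
    ∀ t, 1 ≤ t → η t = (2 * (t : ℝ) - 1) * (S (f 2) - S (f 1)) + Real.log 2 := by
  -- sum of k 3 over Icc 1 N
  have sumK : ∀ N, 1 ≤ N → ∑ j ∈ Finset.Icc 1 N, k 3 j
      = (S (f 2) - S (f 1)) + (S (f (2 * N - 1)) - S (f (2 * N + 1))) / 2 := by
    intro N hN
    induction N with
    | zero => omega
    | succ n ih =>
      rcases Nat.lt_or_ge 1 (n + 1) with h1 | h1
      · have hn : 1 ≤ n := by omega
        rw [Finset.sum_Icc_succ_top (by omega : 1 ≤ n + 1), ih hn, hk3 (n + 1) h1]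
        have e1 : 2 * (n + 1) - 1 = 2 * n + 1 := by omega
        have e2 : 2 * (n + 1) - 3 = 2 * n - 1 := by omega
        have e3 : 2 * (n + 1) + 1 = 2 * n + 3 := by omega
        rw [e1, e2, e3]
        ring
      · have hn0 : n = 0 := by omega
        subst hn0
        simp only [Finset.Icc_self, Finset.sum_singleton]
        rw [hk31]
        norm_num
        ring
  -- reindexed weighted sum
  have reidx : ∀ N : ℕ, ∑ m ∈ Finset.Icc 1 N, (2 * (m : ℝ)) * k 3 (N - m + 1)
      = ∑ j ∈ Finset.Icc 1 N, (2 * ((N : ℝ) + 1 - (j : ℝ))) * k 3 j := by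
    intro N
    refine Finset.sum_nbij' (i := fun m => N + 1 - m) (j := fun j => N + 1 - j)
      ?_ ?_ ?_ ?_ ?_
    · intro a ha
      simp only [Finset.mem_Icc] at *
      omega
    · intro a ha
      simp only [Finset.mem_Icc] at *
      omega
    · intro a ha
      simp only [Finset.mem_Icc] at ha
      show N + 1 - (N + 1 - a) = a
      omega
    · intro a ha
      simp only [Finset.mem_Icc] at ha
      show N + 1 - (N + 1 - a) = a
      omega
    · intro a ha
      simp only [Finset.mem_Icc] at ha
      have h1 : N - a + 1 = N + 1 - a := by omega
      have h2 : ((N + 1 - a : ℕ) : ℝ) = (N : ℝ) + 1 - (a : ℝ) := by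
        have : a ≤ N + 1 := by omega
        push_cast [Nat.cast_sub this]
        ring
      rw [h1, h2]
      ring
  -- closed form of the weighted sum
  have sumA : ∀ N : ℕ, 1 ≤ N → ∑ j ∈ Finset.Icc 1 N, (2 * ((N : ℝ) + 1 - (j : ℝ))) * k 3 j
      = 2 * ((N : ℝ) - 1) * (S (f 2) - S (f 1)) + 2 * S (f 2) - S (f 1)
        - S (f (2 * N + 1)) := by
    intro N hN
    induction N with
    | zero => omega
    | succ n ih =>
      rcases Nat.lt_or_ge 1 (n + 1) with h1 | h1
      · have hn : 1 ≤ n := by omega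
        have hsplit : ∀ j ∈ Finset.Icc 1 (n + 1),
            (2 * (((n + 1 : ℕ) : ℝ) + 1 - (j : ℝ))) * k 3 j
              = (2 * ((n : ℝ) + 1 - (j : ℝ))) * k 3 j + 2 * k 3 j := by
          intro j hj
          push_cast
          ring
        rw [Finset.sum_congr rfl hsplit, Finset.sum_add_distrib]
        rw [Finset.sum_Icc_succ_top (by omega : 1 ≤ n + 1)
          (f := fun j => (2 * ((n : ℝ) + 1 - (j : ℝ))) * k 3 j)]
        have htop : (2 * ((n : ℝ) + 1 - ((n + 1 : ℕ) : ℝ))) * k 3 (n + 1) = 0 := by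
          push_cast
          ring
        rw [htop, add_zero, ih hn, ← Finset.mul_sum, sumK (n + 1) (by omega)]
        have e1 : 2 * (n + 1) - 1 = 2 * n + 1 := by omega
        have e3 : 2 * (n + 1) + 1 = 2 * n + 3 := by omega
        rw [e1, e3]
        push_cast
        ring
      · have hn0 : n = 0 := by omega
        subst hn0
        simp only [Finset.Icc_self, Finset.sum_singleton]
        rw [hk31]
        norm_num
        ring
  intro t ht
  have hterm : ∀ m ∈ Finset.Icc 1 t, (2 * (m : ℝ)) * k (2 * m + 1) t
      = (2 * (m : ℝ)) * k 3 (t - m + 1) := by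
    intro m hm
    simp only [Finset.mem_Icc] at hm
    rw [hodd m t hm.1 hm.2]
  rw [hη t, Finset.sum_congr rfl hterm, reidx t, sumA t ht, hk2 t ht]
  ring
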